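/- Let n ≥ 1 be an integer. With c^N_{l,j,k} defined as in the context, for all integers N ≥ 2 and 1 ≤ j ≤ N−1 one has Σ_{l=N+j}^{2N−1} c^N_{l, j, l−N−j} / (2^{m+l−N+j} · Γ(m+l−N+j+1)) = −(π^m/(V_n · 2^m · Γ(m+1))) · (−1)^j/(j · 4^j · Γ(2j+m)). -/

import Mathlib

/-- Generalized binomial coefficient `binom(x, r) = x(x-1)⋯(x-r+1)/r!` for a real
number `x` and a natural number `r`. -/
noncomputable def rbinom (x : ℝ) (r : ℕ) : ℝ :=
  (∏ i ∈ Finset.range r, (x - i)) / (Nat.factorial r)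

/-- `m = n/2` as a real number. -/
noncomputable def mhalf (n : ℕ) : ℝ := (n : ℝ) / 2

/-- `V_n = π^{n/2} / Γ(n/2 + 1)`, the volume of the unit ball of `ℝⁿ`. -/
noncomputable def Vball (n : ℕ) : ℝ := Real.pi ^ mhalf n / Real.Gamma (mhalf n + 1)

/-- `γ_{2j} = (−1)^j π^{n/2} Γ(j) / Γ(n/2 + j)`. -/
noncomputable def gammaCoef (n j : ℕ) : ℝ :=
  (-1 : ℝ) ^ j * Real.pi ^ mhalf n * Real.Gamma j / Real.Gamma (mhalf n + j)

/-- The coefficients `c^N_{l,j,k}`. -/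
noncomputable def cCoef (n N l j k : ℕ) : ℝ :=
  -((-1 : ℝ) ^ k / Vball n) * gammaCoef n j * rbinom ((N : ℝ) + mhalf n - 1) (N - 1) *
      2 ^ k * (Nat.factorial (N - j) : ℝ) * rbinom ((l : ℝ) - 1 + mhalf n) (N - j) *
      rbinom (mhalf n + (j : ℝ) + l - N - 1) k /
    (((l : ℝ) + mhalf n - N) * (Nat.factorial (2 * N - l - 1) : ℝ) *
      (Nat.factorial (l - N - j - k) : ℝ))

open Finset

lemma alt_pascal (K : ℕ) (f : ℕ → ℝ) :
    ∑ k ∈ range (K + 2), (-1 : ℝ) ^ k * ((K + 1).choose k) * f k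
      = ∑ k ∈ range (K + 1), (-1 : ℝ) ^ k * (K.choose k) * (f k - f (k + 1)) := by
  rw [Finset.sum_range_succ' (fun k => (-1 : ℝ) ^ k * ((K + 1).choose k) * f k) (K+1)]
  have h1 : ∀ k, ((K + 1).choose (k + 1) : ℝ) = (K.choose k : ℝ) + (K.choose (k+1) : ℝ) := by
    intro k; rw [Nat.choose_succ_succ]; push_cast; ring
  have h2 : ∑ k ∈ range (K + 1), (-1 : ℝ) ^ (k+1) * ((K + 1).choose (k+1)) * f (k+1)
      = ∑ k ∈ range (K + 1), ((-((-1 : ℝ) ^ k * (K.choose k) * f (k+1)))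
          + (-((-1 : ℝ) ^ k * (K.choose (k+1)) * f (k+1)))) := by
    apply Finset.sum_congr rfl; intro k _
    rw [h1 k]; ring
  rw [h2, Finset.sum_add_distrib, Finset.sum_neg_distrib, Finset.sum_neg_distrib]
  have h3 : ∑ k ∈ range (K + 1), (-1 : ℝ) ^ k * (K.choose (k+1)) * f (k+1)
      = ∑ k ∈ range K, (-1 : ℝ) ^ k * (K.choose (k+1)) * f (k+1) := by
    rw [Finset.sum_range_succ, Nat.choose_succ_self]; simp
  have h4 : ∑ k ∈ range (K + 1), (-1 : ℝ) ^ k * (K.choose k) * f k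
      = ∑ k ∈ range K, (-1 : ℝ) ^ (k+1) * (K.choose (k+1)) * f (k+1)
        + (-1:ℝ)^0 * (K.choose 0) * f 0 :=
    Finset.sum_range_succ' _ K
  have h5 : ∑ k ∈ range K, (-1 : ℝ) ^ k * (K.choose (k+1)) * f (k+1)
      = -∑ k ∈ range K, (-1 : ℝ) ^ (k+1) * (K.choose (k+1)) * f (k+1) := by
    rw [← Finset.sum_neg_distrib]; apply Finset.sum_congr rfl; intro k _; ring
  have h6 : ∑ k ∈ range (K + 1), (-1 : ℝ) ^ k * (K.choose k) * (f k - f (k+1))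
      = ∑ k ∈ range (K + 1), (-1 : ℝ) ^ k * (K.choose k) * f k
        - ∑ k ∈ range (K + 1), (-1 : ℝ) ^ k * (K.choose k) * f (k+1) := by
    rw [← Finset.sum_sub_distrib]; apply Finset.sum_congr rfl; intro k _; ring
  rw [h3, h5, h6, h4]
  simp; ring

lemma alt_inv : ∀ (K : ℕ) (a : ℝ), (∀ i ∈ range (K + 1), a + i ≠ 0) →
    ∑ k ∈ range (K + 1), (-1 : ℝ) ^ k * (K.choose k) * (1 / (a + k))
      = K.factorial / ∏ i ∈ range (K + 1), (a + i) := by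
  intro K
  induction K with
  | zero => intro a ha; simp
  | succ K ih =>
    intro a ha
    have ha0 : ∀ i ∈ range (K + 1), a + i ≠ 0 := fun i hi => ha i (by
      simp at hi ⊢; omega)
    have ha1 : ∀ i ∈ range (K + 1), (a + 1) + i ≠ 0 := by
      intro i hi
      have := ha (i + 1) (by simp at hi ⊢; omega)
      push_cast at this ⊢
      intro h; exact this (by linarith)
    have key := alt_pascal K (fun k => 1 / (a + k))
    have step : ∑ k ∈ range (K + 1), (-1 : ℝ) ^ k * (K.choose k) * (1/(a+k) - 1/(a+(k+1:ℕ)))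
        = ∑ k ∈ range (K + 1), (-1 : ℝ) ^ k * (K.choose k) * (1/(a+k))
          - ∑ k ∈ range (K + 1), (-1 : ℝ) ^ k * (K.choose k) * (1/((a+1)+k)) := by
      rw [← Finset.sum_sub_distrib]; apply Finset.sum_congr rfl; intro k _
      have : a + ((k:ℝ) + 1) = (a+1) + k := by ring
      push_cast
      rw [this]; ring
    have lhs : ∑ k ∈ range (K + 2), (-1 : ℝ) ^ k * ((K+1).choose k) * (1 / (a + k))
        = K.factorial / ∏ i ∈ range (K + 1), (a + i)
          - K.factorial / ∏ i ∈ range (K + 1), ((a+1) + i) := by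
      rw [key, step, ih a ha0, ih (a+1) ha1]
    rw [lhs]
    have p1 : ∏ i ∈ range (K + 2), (a + i) = (∏ i ∈ range (K+1), (a + i)) * (a + ((K:ℝ)+1)) := by
      rw [Finset.prod_range_succ]; push_cast; ring_nf
    have p2 : ∏ i ∈ range (K + 2), (a + i) = a * ∏ i ∈ range (K+1), ((a+1) + i) := by
      rw [Finset.prod_range_succ' (fun i => a + (i:ℝ))]
      rw [mul_comm]
      congr 1
      · simp
      · apply Finset.prod_congr rfl; intro i _; push_cast; ring
    have haK : a + ((K:ℝ) + 1) ≠ 0 := by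
      have := ha (K+1) (by simp); push_cast at this ⊢; exact this
    have ha' : a ≠ 0 := by have := ha 0 (by simp); simpa using this
    have e1 : (K.factorial : ℝ) / ∏ i ∈ range (K+1), (a + i)
        = (K.factorial * (a + ((K:ℝ)+1))) / ∏ i ∈ range (K + 2), (a + i) := by
      rw [p1, mul_div_mul_right _ _ haK]
    have e2 : (K.factorial : ℝ) / ∏ i ∈ range (K+1), ((a+1) + i)
        = (K.factorial * a) / ∏ i ∈ range (K + 2), (a + i) := by
      rw [p2, mul_comm ((K.factorial : ℝ)) a, mul_div_mul_left _ _ ha']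
    have e3 : ((K+1).factorial : ℝ) = K.factorial * (a + ((K:ℝ)+1)) - K.factorial * a := by
      rw [Nat.factorial_succ]; push_cast; ring
    rw [e1, e2, div_sub_div_same, ← e3]

lemma vanish : ∀ (d K : ℕ), d < K → ∀ b : ℝ,
    ∑ k ∈ range (K + 1), (-1 : ℝ) ^ k * (K.choose k) * (∏ i ∈ range d, (b + k + i)) = 0 := by
  intro d
  induction d with
  | zero =>
    intro K hK b
    simp only [Finset.range_zero, Finset.prod_empty, mul_one]
    have := Int.alternating_sum_range_choose (n := K)
    rw [if_neg (by omega)] at this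
    have : ((∑ m ∈ range (K + 1), (-1 : ℤ) ^ m * ↑(K.choose m) : ℤ) : ℝ) = 0 := by
      rw [this]; simp
    rw [← this]; push_cast; ring
  | succ d ih =>
    intro K hK b
    obtain ⟨K', rfl⟩ : ∃ K', K = K' + 1 := ⟨K - 1, by omega⟩
    rw [alt_pascal K' (fun k => ∏ i ∈ range (d+1), (b + k + i))]
    have hterm : ∀ k : ℕ, (∏ i ∈ range (d+1), (b + (k:ℝ) + i))
        - (∏ i ∈ range (d+1), (b + ((k+1 : ℕ):ℝ) + i))
        = -((d:ℝ)+1) * ∏ i ∈ range d, ((b+1) + k + i) := by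
      intro k
      have e1 : ∏ i ∈ range (d+1), (b + (k:ℝ) + i)
          = (∏ i ∈ range d, ((b+1) + (k:ℝ) + i)) * (b + k) := by
        rw [Finset.prod_range_succ' (fun i => b + (k:ℝ) + i)]
        congr 1
        · apply Finset.prod_congr rfl; intro i _; push_cast; ring
        · simp
      have e2 : ∏ i ∈ range (d+1), (b + ((k+1:ℕ):ℝ) + i)
          = (∏ i ∈ range d, ((b+1) + (k:ℝ) + i)) * (b + k + (d+1)) := by
        rw [Finset.prod_range_succ (fun i => b + ((k+1:ℕ):ℝ) + i)]
        congr 1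
        · apply Finset.prod_congr rfl; intro i _; push_cast; ring
        · push_cast; ring
      rw [e1, e2]; ring
    have : ∑ k ∈ range (K' + 1), (-1:ℝ) ^ k * (K'.choose k) *
          ((∏ i ∈ range (d+1), (b + (k:ℝ) + i)) - ∏ i ∈ range (d+1), (b + ((k+1:ℕ):ℝ) + i))
        = -((d:ℝ)+1) * ∑ k ∈ range (K' + 1), (-1:ℝ) ^ k * (K'.choose k) *
            (∏ i ∈ range d, ((b+1) + k + i)) := by
      rw [Finset.mul_sum]
      apply Finset.sum_congr rfl; intro k _
      rw [hterm k]; ring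
    rw [this, ih K' (by omega) (b+1), mul_zero]

lemma telescope : ∀ (K : ℕ) (x : ℝ) (c : ℕ → ℝ),
    ∏ i ∈ range K, (x + c i)
      = x * (∑ t ∈ range K, (∏ i ∈ range t, (x + c i)) * ∏ i ∈ Finset.Ico (t+1) K, c i)
        + ∏ i ∈ range K, c i := by
  intro K
  induction K with
  | zero => intro x c; simp
  | succ K ih =>
    intro x c
    rw [Finset.prod_range_succ, ih x c, Finset.prod_range_succ]
    have hsum : ∑ t ∈ range (K+1), (∏ i ∈ range t, (x + c i)) * ∏ i ∈ Finset.Ico (t+1) (K+1), c i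
        = (∑ t ∈ range K, (∏ i ∈ range t, (x + c i)) * ∏ i ∈ Finset.Ico (t+1) K, c i) * (x + c K)
          + ∏ i ∈ range K, c i := by
      rw [Finset.sum_range_succ]
      have h1 : ∀ t ∈ range K, (∏ i ∈ range t, (x + c i)) * ∏ i ∈ Finset.Ico (t+1) (K+1), c i
          = ((∏ i ∈ range t, (x + c i)) * ∏ i ∈ Finset.Ico (t+1) K, c i) * c K := by
        intro t ht
        simp at ht
        rw [Finset.prod_Ico_succ_top (by omega)]
        ring
      rw [Finset.sum_congr rfl h1, ← Finset.sum_mul]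
      have h2 : Finset.Ico (K+1) (K+1) = ∅ := by simp
      rw [h2]
      simp only [Finset.prod_empty, mul_one]
      rw [ih x c]
      ring
    rw [hsum]
    ring

lemma const_prod (j : ℕ) : ∀ K : ℕ,
    ∏ i ∈ range K, ((j:ℝ) + 1 + i) = (K + j).factorial / j.factorial := by
  intro K
  have hj : (j.factorial : ℝ) ≠ 0 := Nat.cast_ne_zero.mpr (Nat.factorial_ne_zero j)
  induction K with
  | zero => simp [div_self hj]
  | succ K ih =>
    rw [Finset.prod_range_succ, ih]
    have : ((K + 1 + j).factorial : ℝ) = ((K + j).factorial : ℝ) * ((j:ℝ) + 1 + K) := by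
      have h : K + 1 + j = (K + j) + 1 := by omega
      rw [h, Nat.factorial_succ]; push_cast; ring
    rw [this]
    field_simp

lemma keylem (K j : ℕ) (a : ℝ) (ha : ∀ i ∈ range (K + 1), a + i ≠ 0) :
    ∑ k ∈ range (K + 1), (-1 : ℝ) ^ k * (K.choose k) *
        ((∏ i ∈ range K, (a + j + 1 + k + i)) / (a + k))
      = ((K + j).factorial / j.factorial) * K.factorial / ∏ i ∈ range (K + 1), (a + i) := by
  have hterm : ∀ k ∈ range (K+1),
      (∏ i ∈ range K, (a + (j:ℝ) + 1 + (k:ℕ) + i)) / (a + k)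
        = (∑ t ∈ range K, (∏ i ∈ range t, ((a + (j:ℝ) + 1) + (k:ℕ) + i)) *
            ∏ i ∈ Finset.Ico (t+1) K, ((j:ℝ) + 1 + i))
          + (∏ i ∈ range K, ((j:ℝ) + 1 + i)) * (1 / (a + k)) := by
    intro k hk
    have hak : a + (k:ℝ) ≠ 0 := ha k hk
    have htel := telescope K (a + k) (fun i => (j:ℝ) + 1 + i)
    have hpr : ∏ i ∈ range K, (a + (j:ℝ) + 1 + (k:ℕ) + i)
        = ∏ i ∈ range K, ((a + (k:ℝ)) + ((j:ℝ) + 1 + i)) := by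
      apply Finset.prod_congr rfl; intro i _; ring
    have hS : ∑ t ∈ range K, (∏ i ∈ range t, (a + (k:ℝ) + ((j:ℝ) + 1 + i))) *
            ∏ i ∈ Finset.Ico (t+1) K, ((j:ℝ) + 1 + i)
        = ∑ t ∈ range K, (∏ i ∈ range t, ((a + (j:ℝ) + 1) + (k:ℕ) + i)) *
            ∏ i ∈ Finset.Ico (t+1) K, ((j:ℝ) + 1 + i) := by
      apply Finset.sum_congr rfl; intro t _
      congr 1
      apply Finset.prod_congr rfl; intro i _; ring
    rw [hpr, htel, hS, add_div, mul_div_cancel_left₀ _ hak, mul_one_div]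
  rw [Finset.sum_congr rfl (fun k hk => by rw [hterm k hk])]
  have split : ∀ k : ℕ, (-1:ℝ)^k * (K.choose k) *
      ((∑ t ∈ range K, (∏ i ∈ range t, ((a + (j:ℝ) + 1) + (k:ℕ) + i)) *
            ∏ i ∈ Finset.Ico (t+1) K, ((j:ℝ) + 1 + i))
          + (∏ i ∈ range K, ((j:ℝ) + 1 + i)) * (1 / (a + k)))
      = (∑ t ∈ range K, ((-1:ℝ)^k * (K.choose k) *
            ∏ i ∈ range t, ((a + (j:ℝ) + 1) + (k:ℕ) + i)) *
            ∏ i ∈ Finset.Ico (t+1) K, ((j:ℝ) + 1 + i))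
        + (∏ i ∈ range K, ((j:ℝ) + 1 + i)) * ((-1:ℝ)^k * (K.choose k) * (1 / (a + k))) := by
    intro k
    rw [mul_add, Finset.mul_sum]
    congr 1
    · apply Finset.sum_congr rfl; intro t _; ring
    · ring
  rw [Finset.sum_congr rfl (fun k _ => split k), Finset.sum_add_distrib]
  have hzero : ∑ k ∈ range (K+1), ∑ t ∈ range K, ((-1:ℝ)^k * (K.choose k) *
            ∏ i ∈ range t, ((a + (j:ℝ) + 1) + (k:ℕ) + i)) *
            ∏ i ∈ Finset.Ico (t+1) K, ((j:ℝ) + 1 + i) = 0 := by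
    rw [Finset.sum_comm]
    apply Finset.sum_eq_zero
    intro t ht
    rw [← Finset.sum_mul, vanish t K (Finset.mem_range.mp ht) (a + j + 1), zero_mul]
  rw [hzero, zero_add, ← Finset.mul_sum, alt_inv K a ha, const_prod j K]
  rw [mul_div_assoc]

lemma Gamma_prod (a : ℝ) (ha : 0 < a) : ∀ k : ℕ,
    Real.Gamma (a + k) = Real.Gamma a * ∏ i ∈ range k, (a + i) := by
  intro k
  induction k with
  | zero => simp
  | succ k ih =>
    have h : a + ((k:ℝ) + 1) = (a + k) + 1 := by ring
    push_cast
    rw [h, Real.Gamma_add_one (by positivity), ih, Finset.prod_range_succ]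
    push_cast; ring

lemma prod_rev (x : ℝ) (r : ℕ) :
    ∏ i ∈ range r, (x - i) = ∏ i ∈ range r, (x + 1 + i - r) := by
  rw [← Finset.prod_range_reflect (fun i => x + 1 + (i:ℝ) - r) r]
  apply Finset.prod_congr rfl
  intro i hi
  have hi' : i < r := Finset.mem_range.mp hi
  have h1 : r - 1 - i = r - (1 + i) := by omega
  rw [h1, Nat.cast_sub (by omega : 1 + i ≤ r)]
  push_cast; ring

lemma perterm (n N j k K : ℕ) (hn : 1 ≤ n) (hj : 1 ≤ j) (hN : N = K + j + 1)
    (hkK : k ≤ K) :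
    cCoef n N (N + j + k) j ((N + j + k) - N - j) /
        ((2 : ℝ) ^ (mhalf n + ((N + j + k : ℕ) : ℝ) - N + j) *
          Real.Gamma (mhalf n + ((N + j + k : ℕ) : ℝ) - N + j + 1))
      = (-(gammaCoef n j) * rbinom ((N : ℝ) + mhalf n - 1) (N - 1) /
          (Vball n * (2:ℝ) ^ (mhalf n) * 4 ^ j * Real.Gamma (mhalf n + 2 * j) *
            (K.factorial : ℝ))) *
        ((-1 : ℝ) ^ k * (K.choose k) *
          ((∏ i ∈ range K, ((mhalf n + j) + j + 1 + k + i)) / ((mhalf n + j) + k))) := by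
  have hm : 0 < mhalf n := by
    unfold mhalf
    have : (1:ℝ) ≤ (n:ℝ) := by exact_mod_cast hn
    linarith
  set m := mhalf n with hmdef
  -- nat subtraction simplifications
  have e0 : N + j + k - N - j = k := by omega
  have e1 : N - j = K + 1 := by omega
  have e2 : 2 * N - (N + j + k) - 1 = K - k := by omega
  have e3 : N + j + k - N - j - k = 0 := by omega
  rw [e0]
  unfold cCoef
  rw [e1, e2]
  have e3' : N + j + k - N - j - k = 0 := e3
  rw [e3']
  -- cast of l
  have hl : ((N + j + k : ℕ) : ℝ) = (N:ℝ) + j + k := by push_cast; ring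
  have hN' : (N:ℝ) = (K:ℝ) + j + 1 := by rw [hN]; push_cast; ring
  -- rbinom B2
  have hB2 : rbinom (((N + j + k : ℕ) : ℝ) - 1 + m) (K + 1)
      = ((∏ i ∈ range K, ((m + j) + j + 1 + k + i)) * (m + j + j + k)) /
          ((K + 1).factorial : ℝ) := by
    unfold rbinom
    congr 1
    rw [prod_rev]
    rw [Finset.prod_range_succ' (fun i => ((N + j + k : ℕ) : ℝ) - 1 + m + 1 + (i:ℝ) - ((K+1 : ℕ):ℝ))]
    congr 1
    · apply Finset.prod_congr rfl; intro i _
      rw [hl, hN']; push_cast; ring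
    · rw [hl, hN']; push_cast; ring
  -- rbinom B3
  have hB3 : rbinom (m + (j:ℝ) + ((N + j + k : ℕ) : ℝ) - N - 1) k
      = (∏ i ∈ range k, (m + j + j + i)) / (k.factorial : ℝ) := by
    unfold rbinom
    congr 1
    rw [prod_rev]
    apply Finset.prod_congr rfl; intro i _
    rw [hl]; push_cast; ring
  -- Gamma
  have hGa : Real.Gamma (m + ((N + j + k : ℕ) : ℝ) - N + j + 1)
      = Real.Gamma (m + 2 * j) * (∏ i ∈ range k, (m + j + j + i)) * (m + j + j + k) := by
    have harg : m + ((N + j + k : ℕ) : ℝ) - N + j + 1 = (m + 2 * j) + ((k:ℕ) + 1 : ℕ) := by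
      rw [hl]; push_cast; ring
    rw [harg, Gamma_prod (m + 2 * j) (by positivity) (k + 1), Finset.prod_range_succ]
    have : ∀ i : ℕ, m + 2 * j + i = m + j + j + i := by intro i; ring
    simp only [this]
    ring
  -- rpow
  have hPow : (2:ℝ) ^ (m + ((N + j + k : ℕ) : ℝ) - N + j)
      = (2:ℝ) ^ m * 4 ^ j * 2 ^ k := by
    have harg : m + ((N + j + k : ℕ) : ℝ) - N + j = m + ((2 * j + k : ℕ) : ℝ) := by
      rw [hl]; push_cast; ring
    rw [harg, Real.rpow_add two_pos, Real.rpow_natCast, pow_add, pow_mul]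
    norm_num [mul_assoc]
  -- denominator linear factor
  have hden : ((N + j + k : ℕ) : ℝ) + m - N = m + j + k := by rw [hl]; push_cast; ring
  rw [hB2, hB3, hGa, hPow, hden]
  -- choose
  have hch : ((K.choose k : ℕ) : ℝ) * (k.factorial : ℝ) * ((K - k).factorial : ℝ)
      = (K.factorial : ℝ) := by exact_mod_cast Nat.choose_mul_factorial_mul_factorial hkK
  -- nonzero facts
  have hV : Vball n ≠ 0 := by
    unfold Vball
    have h1 : (0:ℝ) < Real.pi ^ m := Real.rpow_pos_of_pos Real.pi_pos m
    have h2 : (0:ℝ) < Real.Gamma (m + 1) := Real.Gamma_pos_of_pos (by linarith)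
    positivity
  have hG2 : Real.Gamma (m + 2 * j) > 0 := Real.Gamma_pos_of_pos (by positivity)
  have hPk : (0:ℝ) < ∏ i ∈ range k, (m + j + j + i) := by
    apply Finset.prod_pos; intro i _
    have : (0:ℝ) ≤ (j:ℝ) := Nat.cast_nonneg j
    have : (0:ℝ) ≤ (i:ℝ) := Nat.cast_nonneg i
    positivity
  have hmjk : (0:ℝ) < m + j + k := by positivity
  have hm2jk : (0:ℝ) < m + j + j + k := by positivity
  have h2m : (0:ℝ) < (2:ℝ) ^ m := Real.rpow_pos_of_pos two_pos m
  have hfk : (k.factorial : ℝ) ≠ 0 := Nat.cast_ne_zero.mpr k.factorial_ne_zero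
  have hfKk : ((K - k).factorial : ℝ) ≠ 0 := Nat.cast_ne_zero.mpr (K - k).factorial_ne_zero
  have hfK1 : ((K + 1).factorial : ℝ) ≠ 0 := Nat.cast_ne_zero.mpr (K + 1).factorial_ne_zero
  have hfK : (K.factorial : ℝ) ≠ 0 := Nat.cast_ne_zero.mpr K.factorial_ne_zero
  -- final algebra
  rw [Nat.factorial_zero]
  have hCh0 : ((K.choose k):ℝ) ≠ 0 := Nat.cast_ne_zero.mpr (Nat.choose_pos hkK).ne'
  have hG2' : Real.Gamma (m + 2 * j) ≠ 0 := ne_of_gt hG2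
  have hPk' : (∏ i ∈ range k, (m + (j:ℝ) + j + i)) ≠ 0 := ne_of_gt hPk
  have hmjk' : m + (j:ℝ) + k ≠ 0 := ne_of_gt hmjk
  have hm2jk' : m + (j:ℝ) + j + k ≠ 0 := ne_of_gt hm2jk
  have h2m' : (2:ℝ) ^ m ≠ 0 := ne_of_gt h2m
  rw [← hch]
  field_simp
  ring

/-- For all integers `N ≥ 2` and `1 ≤ j ≤ N−1`,
`Σ_{l=N+j}^{2N−1} c^N_{l,j,l−N−j} / (2^{m+l−N+j} Γ(m+l−N+j+1))
 = −(π^m/(V_n 2^m Γ(m+1))) · (−1)^j/(j 4^j Γ(2j+m))`. -/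
theorem statement15 (n : ℕ) (hn : 1 ≤ n) (N j : ℕ) (hN : 2 ≤ N) (hj : 1 ≤ j)
    (hj2 : j ≤ N - 1) :
    ∑ l ∈ Finset.Icc (N + j) (2 * N - 1),
        cCoef n N l j (l - N - j) /
          ((2 : ℝ) ^ (mhalf n + (l : ℝ) - N + j) *
            Real.Gamma (mhalf n + (l : ℝ) - N + j + 1))
      = -(Real.pi ^ mhalf n / (Vball n * (2 : ℝ) ^ mhalf n * Real.Gamma (mhalf n + 1))) *
          ((-1 : ℝ) ^ j / ((j : ℝ) * 4 ^ j * Real.Gamma (2 * (j : ℝ) + mhalf n))) := by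
  have hm : 0 < mhalf n := by
    unfold mhalf
    have : (1:ℝ) ≤ (n:ℝ) := by exact_mod_cast hn
    linarith
  set m := mhalf n with hmdef
  obtain ⟨K, hNK⟩ : ∃ K, N = K + j + 1 := ⟨N - 1 - j, by omega⟩
  -- reindex sum
  have hIcc : Finset.Icc (N + j) (2 * N - 1) = Finset.Ico (N + j) (2 * N) := by
    rw [← Finset.Ico_add_one_right_eq_Icc]
    congr 1
    omega
  rw [hIcc, Finset.sum_Ico_eq_sum_range]
  have hcard : 2 * N - (N + j) = K + 1 := by omega
  rw [hcard]
  have hsum : ∑ k ∈ range (K + 1),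
      cCoef n N (N + j + k) j ((N + j + k) - N - j) /
        ((2 : ℝ) ^ (m + ((N + j + k : ℕ) : ℝ) - N + j) *
          Real.Gamma (m + ((N + j + k : ℕ) : ℝ) - N + j + 1))
      = ∑ k ∈ range (K + 1),
        (-(gammaCoef n j) * rbinom ((N : ℝ) + m - 1) (N - 1) /
          (Vball n * (2:ℝ) ^ m * 4 ^ j * Real.Gamma (m + 2 * j) *
            (K.factorial : ℝ))) *
        ((-1 : ℝ) ^ k * (K.choose k) *
          ((∏ i ∈ range K, ((m + j) + j + 1 + k + i)) / ((m + j) + k))) := by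
    apply Finset.sum_congr rfl
    intro k hk
    have hk' : k ≤ K := by have := Finset.mem_range.mp hk; omega
    exact perterm n N j k K hn hj hNK hk'
  rw [hsum, ← Finset.mul_sum]
  have ha : ∀ i ∈ range (K + 1), (m + (j:ℝ)) + i ≠ 0 := by
    intro i _
    have h1 : (0:ℝ) ≤ (j:ℝ) := Nat.cast_nonneg j
    have h2 : (0:ℝ) ≤ (i:ℝ) := Nat.cast_nonneg i
    positivity
  rw [keylem K j (m + j) ha]
  -- final constants
  have hGj : (0:ℝ) < Real.Gamma (m + j) := Real.Gamma_pos_of_pos (by positivity)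
  have hG1 : (0:ℝ) < Real.Gamma (m + 1) := Real.Gamma_pos_of_pos (by linarith)
  have hG2j : (0:ℝ) < Real.Gamma (m + 2 * j) := Real.Gamma_pos_of_pos (by positivity)
  have hGN : (0:ℝ) < Real.Gamma (m + N) := Real.Gamma_pos_of_pos (by positivity)
  have hpi : (0:ℝ) < Real.pi ^ m := Real.rpow_pos_of_pos Real.pi_pos m
  have h2m : (0:ℝ) < (2:ℝ) ^ m := Real.rpow_pos_of_pos two_pos m
  -- F1
  have hF1 : ∏ i ∈ range (K + 1), ((m + j) + i) = Real.Gamma (m + N) / Real.Gamma (m + j) := by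
    have := Gamma_prod (m + j) (by positivity) (K + 1)
    have harg : (m + (j:ℝ)) + ((K + 1 : ℕ):ℝ) = m + (N:ℝ) := by
      rw [hNK]; push_cast; ring
    rw [harg] at this
    rw [this]
    field_simp
  -- F2
  have hF2 : rbinom ((N : ℝ) + m - 1) (N - 1)
      = Real.Gamma (m + N) / (Real.Gamma (m + 1) * ((K + j).factorial : ℝ)) := by
    unfold rbinom
    have hNm1 : N - 1 = K + j := by omega
    rw [hNm1, prod_rev]
    have hpr : ∏ i ∈ range (K + j), ((N:ℝ) + m - 1 + 1 + i - ((K + j : ℕ):ℝ))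
        = ∏ i ∈ range (K + j), ((m + 1) + i) := by
      apply Finset.prod_congr rfl
      intro i _
      rw [hNK]; push_cast; ring
    have hg := Gamma_prod (m + 1) (by linarith) (K + j)
    have harg : (m + 1) + ((K + j : ℕ):ℝ) = m + (N:ℝ) := by rw [hNK]; push_cast; ring
    rw [harg] at hg
    rw [hpr, hg, mul_div_mul_left _ _ (ne_of_gt hG1)]
  -- gammaCoef expansion with Gamma j = (j-1)!
  have hGj' : Real.Gamma (j:ℝ) = ((j-1).factorial : ℝ) := by
    rw [← Real.Gamma_nat_eq_factorial (j-1)]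
    congr 1
    rw [Nat.cast_sub hj]; push_cast; ring
  have hfacj : (j.factorial : ℝ) = (j:ℝ) * ((j-1).factorial : ℝ) := by
    have h : j - 1 + 1 = j := by omega
    calc (j.factorial : ℝ) = (((j-1)+1).factorial : ℝ) := by rw [h]
    _ = ((((j-1)+1) * (j-1).factorial : ℕ) : ℝ) := by rw [Nat.factorial_succ]
    _ = (j:ℝ) * ((j-1).factorial : ℝ) := by push_cast [h]; ring
  unfold gammaCoef Vball
  simp only [← hmdef]
  rw [hGj', hF1, hF2, hfacj]
  have harg2 : 2 * (j:ℝ) + m = m + 2 * j := by ring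
  rw [harg2]
  have hj0 : ((j:ℝ)) ≠ 0 := Nat.cast_ne_zero.mpr (by omega)
  have hfj1 : (((j-1).factorial : ℕ) : ℝ) ≠ 0 := Nat.cast_ne_zero.mpr (j-1).factorial_ne_zero
  have hfKj : (((K+j).factorial : ℕ) : ℝ) ≠ 0 := Nat.cast_ne_zero.mpr (K+j).factorial_ne_zero
  have hfK : ((K.factorial : ℕ) : ℝ) ≠ 0 := Nat.cast_ne_zero.mpr K.factorial_ne_zero
  have h4j : ((4:ℝ)) ^ j ≠ 0 := by positivity
  field_simp
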